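/- For every integer k ≥ 0, the number of coloring-partitions of Q_k that arise from proper 4-colorings assigning four pairwise distinct colors to the vertices a_0, b_0, c_0, d_0 (colorings of type I) is exactly 2^{k+1}. -/

import Mathlib

set_option maxRecDepth 40000


/-- A proper 4-coloring of a simple graph `G`. -/
def IsProperColoring {V : Type*} (G : SimpleGraph V) (f : V → Fin 4) : Prop :=
  ∀ ⦃u v : V⦄, G.Adj u v → f u ≠ f v

/-- `kempeCount G f a b` is the number of `ab`-Kempe chains of `f`, i.e. the number of
connected components of the subgraph of `G` induced on `f⁻¹({a, b})`. -/
noncomputable def kempeCount {V : Type*} (G : SimpleGraph V) (f : V → Fin 4)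
    (a b : Fin 4) : ℕ :=
  Nat.card ((G.induce {v | f v = a ∨ f v = b}).ConnectedComponent)

/-- Tutte's quantity `J_a(f) = p(a,b) + p(a,c) + p(a,d) - p(b,c) - p(b,d) - p(c,d)`,
where `{b, c, d} = Fin 4 \ {a}`. -/
noncomputable def Jcol {V : Type*} (G : SimpleGraph V) (f : V → Fin 4) (a : Fin 4) : ℤ :=
  (∑ x ∈ Finset.univ.erase a, (kempeCount G f a x : ℤ)) -
    ∑ x ∈ Finset.univ.erase a,
      ∑ y ∈ (Finset.univ.erase a).filter (fun y => x < y), (kempeCount G f x y : ℤ)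

/-- The coloring-partition of `f`: the set of its nonempty color classes. -/
def colPart {V : Type*} (f : V → Fin 4) : Set (Set V) :=
  {A | A.Nonempty ∧ ∃ c, A = f ⁻¹' {c}}

/-- `P` is a coloring-partition of `G` if it is the coloring-partition of some proper
4-coloring of `G`. -/
def IsColoringPartition {V : Type*} (G : SimpleGraph V) (P : Set (Set V)) : Prop :=
  ∃ f, IsProperColoring G f ∧ P = colPart f

/-- The set of all color classes of proper 4-colorings of `G`. -/
def colorClasses {V : Type*} (G : SimpleGraph V) : Set (Set V) :=
  {A | A.Nonempty ∧ ∃ f c, IsProperColoring G f ∧ A = f ⁻¹' {c}}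

/-- The 4-coloring complex `B(G)`: vertices are color classes of proper 4-colorings of `G`,
two distinct classes being adjacent iff they are color classes of a common proper
4-coloring. -/
def colorComplex {V : Type*} (G : SimpleGraph V) : SimpleGraph (colorClasses G) :=
  SimpleGraph.fromRel (fun A B => ∃ f, IsProperColoring G f ∧
    (∃ c, (A : Set V) = f ⁻¹' {c}) ∧ (∃ c, (B : Set V) = f ⁻¹' {c}))

/-- Two proper 4-colorings are adjacent if they have a common (nonempty) color class. -/
def ColAdj {V : Type*} (G : SimpleGraph V) (f g : V → Fin 4) : Prop :=
  IsProperColoring G f ∧ IsProperColoring G g ∧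
    ∃ c c', (f ⁻¹' {c}).Nonempty ∧ f ⁻¹' {c} = g ⁻¹' {c'}

/-- Generating relation for the triangulation `Q_k`.  The vertex `(i, 0)` is `a_i`,
`(i, 1)` is `b_i`, `(i, 2)` is `c_i` and `(i, 3)` is `d_i`.  Edges: the 4-cycles
`a_i b_i c_i d_i`, connecting edges between consecutive cycles, and the chords
`a_0 c_0` and `a_{k+1} c_{k+1}`. -/
def qkRel (k : ℕ) (u v : Fin (k + 2) × Fin 4) : Prop :=
  (u.1 = v.1 ∧ v.2 = u.2 + 1) ∨
  ((v.1 : ℕ) = (u.1 : ℕ) + 1 ∧ (v.2 = u.2 ∨ v.2 = u.2 + 1)) ∨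
  ((u.1 : ℕ) = 0 ∧ (v.1 : ℕ) = 0 ∧ u.2 = 0 ∧ v.2 = 2) ∨
  ((u.1 : ℕ) = k + 1 ∧ (v.1 : ℕ) = k + 1 ∧ u.2 = 0 ∧ v.2 = 2)

/-- The triangulation `Q_k`. -/
def Qk (k : ℕ) : SimpleGraph (Fin (k + 2) × Fin 4) := SimpleGraph.fromRel (qkRel k)


namespace QkAux

/-- step size determined by a bit: `0 ↦ 1`, `1 ↦ 2`. -/
def step2 (b : Fin 2) : Fin 4 := if b = 0 then 1 else 2

lemma step2_cases (b : Fin 2) : step2 b = 1 ∨ step2 b = 2 := by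
  fin_cases b <;> simp [step2]

/-- cumulative shift at level `i` from the bit sequence. -/
def tsh {k : ℕ} (ε : Fin (k + 1) → Fin 2) : ℕ → Fin 4
  | 0 => 0
  | i + 1 => tsh ε i + (if h : i < k + 1 then step2 (ε ⟨i, h⟩) else 0)

/-- the shift coloring associated to a bit sequence. -/
def fcol {k : ℕ} (ε : Fin (k + 1) → Fin 2) (v : Fin (k + 2) × Fin 4) : Fin 4 :=
  v.2 + tsh ε (v.1 : ℕ)

lemma tsh_succ {k : ℕ} (ε : Fin (k + 1) → Fin 2) (i : ℕ) (h : i < k + 1) :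
    tsh ε (i + 1) = tsh ε i + step2 (ε ⟨i, h⟩) := by
  simp [tsh, dif_pos h]
  rw [dif_pos (by omega)]

lemma tsh_congr {k : ℕ} (ε ε' : Fin (k + 1) → Fin 2) :
    ∀ m, (∀ j (hj : j < m) (h : j < k + 1), ε ⟨j, h⟩ = ε' ⟨j, h⟩) → tsh ε m = tsh ε' m := by
  intro m
  induction m with
  | zero => intro _; rfl
  | succ n ih =>
    intro hm
    simp only [tsh]
    rw [ih (fun j hj h => hm j (Nat.lt_succ_of_lt hj) h)]
    congr 1
    by_cases h : n < k + 1
    · rw [dif_pos h, dif_pos h, hm n (Nat.lt_succ_self n) h]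
    · rw [dif_neg h, dif_neg h]

lemma fcol_proper {k : ℕ} (ε : Fin (k + 1) → Fin 2) : IsProperColoring (Qk k) (fcol ε) := by
  have key : ∀ u v : Fin (k + 2) × Fin 4, qkRel k u v → fcol ε u ≠ fcol ε v := by
    rintro ⟨i, a⟩ ⟨i', b⟩ hrel
    rcases hrel with ⟨h1, h2⟩ | ⟨h1, h2⟩ | ⟨h1, h1', h2, h2'⟩ | ⟨h1, h1', h2, h2'⟩
    · -- cycle edge
      simp only at h1 h2
      subst h1; subst h2
      simp only [fcol]
      have : ∀ a T : Fin 4, a + T ≠ a + 1 + T := by decide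
      exact this a _
    · -- connecting edge
      simp only at h1 h2
      have hlt : (i : ℕ) < k + 1 := by have := i'.isLt; omega
      simp only [fcol]
      rw [h1, tsh_succ ε (i : ℕ) hlt]
      have key2 : ∀ a T s : Fin 4, s = 1 ∨ s = 2 →
          a + T ≠ a + (T + s) ∧ a + T ≠ a + 1 + (T + s) := by decide
      rcases h2 with h2 | h2 <;> subst h2
      · exact (key2 _ _ _ (step2_cases _)).1
      · exact (key2 _ _ _ (step2_cases _)).2
    · -- chord at level 0
      simp only at h1 h1' h2 h2'
      subst h2; subst h2'
      simp only [fcol]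
      rw [show (i' : ℕ) = (i : ℕ) by omega]
      have : ∀ T : Fin 4, (0 : Fin 4) + T ≠ 2 + T := by decide
      exact this _
    · -- chord at level k+1
      simp only at h1 h1' h2 h2'
      subst h2; subst h2'
      simp only [fcol]
      rw [show (i' : ℕ) = (i : ℕ) by omega]
      have : ∀ T : Fin 4, (0 : Fin 4) + T ≠ 2 + T := by decide
      exact this _
  intro u v huv
  rw [Qk, SimpleGraph.fromRel_adj] at huv
  rcases huv.2 with h | h
  · exact key u v h
  · exact fun he => key v u h he.symm

lemma qk_adj_cycle {k : ℕ} (i : Fin (k + 2)) (j : Fin 4) : (Qk k).Adj (i, j) (i, j + 1) := by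
  rw [Qk, SimpleGraph.fromRel_adj]
  refine ⟨?_, Or.inl (Or.inl ⟨rfl, rfl⟩)⟩
  intro h
  have h2 : j = j + 1 := congrArg Prod.snd h
  have : ∀ j : Fin 4, j ≠ j + 1 := by decide
  exact this j h2

lemma qk_adj_up {k : ℕ} (i : ℕ) (hi : i < k + 1) (j j' : Fin 4) (hj : j' = j ∨ j' = j + 1) :
    (Qk k).Adj (⟨i, by omega⟩, j) (⟨i + 1, by omega⟩, j') := by
  rw [Qk, SimpleGraph.fromRel_adj]
  constructor
  · intro h
    have h1 : (⟨i, by omega⟩ : Fin (k + 2)) = ⟨i + 1, by omega⟩ := congrArg Prod.fst h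
    have := Fin.mk.injEq i (by omega : i < k + 2) (i+1) (by omega) ▸ h1
    simp [Fin.mk.injEq] at h1
  · exact Or.inl (Or.inr (Or.inl ⟨rfl, hj⟩))

/-- Key step: if level `i` is a shifted copy of `σ`, then level `i+1` is shifted
by an additional `1` or `2`. -/
lemma level_step {k : ℕ} {f : Fin (k + 2) × Fin 4 → Fin 4} (hf : IsProperColoring (Qk k) f)
    (e : Fin 4 ≃ Fin 4) (i : ℕ) (hi : i < k + 1) (s : Fin 4)
    (hs : ∀ j, f (⟨i, by omega⟩, j) = e (j + s)) :
    ∃ d : Fin 4, (d = 1 ∨ d = 2) ∧ ∀ j, f (⟨i + 1, by omega⟩, j) = e (j + s + d) := by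
  set d : Fin 4 → Fin 4 := fun j => e.symm (f (⟨i + 1, by omega⟩, j)) - (j + s) with hd
  have feq : ∀ j, f (⟨i + 1, by omega⟩, j) = e (j + s + d j) := by
    intro j
    have : j + s + d j = e.symm (f (⟨i + 1, by omega⟩, j)) := by
      simp [hd]
    rw [this, Equiv.apply_symm_apply]
  have h0 : ∀ j, d j ≠ 0 := by
    intro j hj0
    have hadj := hf (qk_adj_up i hi j j (Or.inl rfl))
    rw [hs j, feq j, hj0, add_zero] at hadj
    exact hadj rfl
  have h3 : ∀ j, d (j + 1) ≠ 3 := by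
    intro j hj3
    have hadj := hf (qk_adj_up i hi j (j + 1) (Or.inr rfl))
    rw [hs j, feq (j + 1), hj3] at hadj
    apply hadj
    congr 1
    have : ∀ j s : Fin 4, j + s = j + 1 + s + 3 := by decide
    exact this j s
  have hcyc : ∀ j : Fin 4, j + s + d j ≠ j + 1 + s + d (j + 1) := by
    intro j heq
    have hadj := hf (qk_adj_cycle (⟨i + 1, by omega⟩ : Fin (k + 2)) j)
    rw [feq j, feq (j + 1)] at hadj
    exact hadj (congrArg e heq)
  have comb : ∀ (s : Fin 4) (d : Fin 4 → Fin 4), (∀ j, d j ≠ 0) → (∀ j, d (j + 1) ≠ 3) →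
      (∀ j, j + s + d j ≠ j + 1 + s + d (j + 1)) →
      (∀ j, d j = 1) ∨ (∀ j, d j = 2) := by decide
  rcases comb s d h0 h3 hcyc with h | h
  · exact ⟨1, Or.inl rfl, fun j => by rw [feq j, h j]⟩
  · exact ⟨2, Or.inr rfl, fun j => by rw [feq j, h j]⟩

lemma exists_eps {k : ℕ} {f : Fin (k + 2) × Fin 4 → Fin 4} (hf : IsProperColoring (Qk k) f)
    (e : Fin 4 ≃ Fin 4) (h0 : ∀ j, f ((0 : Fin (k + 2)), j) = e j) :
    ∃ ε : Fin (k + 1) → Fin 2, ∀ (i : ℕ) (hi : i < k + 2) (j : Fin 4),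
      f (⟨i, hi⟩, j) = e (j + tsh ε i) := by
  have main : ∀ n, n ≤ k + 1 → ∃ ε : Fin (k + 1) → Fin 2,
      ∀ (i : ℕ) (hi : i < k + 2), i ≤ n → ∀ j, f (⟨i, hi⟩, j) = e (j + tsh ε i) := by
    intro n
    induction n with
    | zero =>
      intro _
      refine ⟨fun _ => 0, ?_⟩
      intro i hi hin j
      interval_cases i
      have : (⟨0, hi⟩ : Fin (k + 2)) = 0 := by
        apply Fin.ext
        simp
      rw [this]
      simpa [tsh] using h0 j
    | succ n ih =>
      intro hn1
      obtain ⟨ε, hε⟩ := ih (by omega)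
      have hnk : n < k + 1 := by omega
      obtain ⟨d, hd, hfd⟩ := level_step hf e n hnk (tsh ε n)
        (fun j => hε n (by omega) le_rfl j)
      set b : Fin 2 := if d = 1 then 0 else 1 with hb
      set ε' : Fin (k + 1) → Fin 2 := Function.update ε ⟨n, hnk⟩ b with hε'
      have htsh : ∀ m, m ≤ n → tsh ε' m = tsh ε m := by
        intro m hm
        apply tsh_congr
        intro j hj h
        rw [hε', Function.update_of_ne]
        simp only [ne_eq, Fin.mk.injEq]
        omega
      have hstep : step2 (ε' ⟨n, hnk⟩) = d := by
        rw [hε', Function.update_self, hb]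
        rcases hd with hd | hd <;> subst hd <;> simp [step2]
      refine ⟨ε', ?_⟩
      intro i hi hin j
      rcases Nat.lt_or_ge i (n + 1) with hlt | hge
      · rw [htsh i (by omega)]
        exact hε i hi (by omega) j
      · have : i = n + 1 := by omega
        subst this
        rw [tsh_succ ε' n hnk, htsh n le_rfl, hstep, ← add_assoc]
        exact hfd j
  obtain ⟨ε, hε⟩ := main (k + 1) le_rfl
  exact ⟨ε, fun i hi j => hε i hi (by omega) j⟩

lemma colPart_comp_equiv {V : Type*} (e : Fin 4 ≃ Fin 4) (g : V → Fin 4) :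
    colPart (⇑e ∘ g) = colPart g := by
  ext A
  simp only [colPart, Set.mem_setOf_eq, and_congr_right_iff]
  intro _
  constructor
  · rintro ⟨c, rfl⟩
    refine ⟨e.symm c, ?_⟩
    ext x
    simp [Equiv.eq_symm_apply]
  · rintro ⟨c, rfl⟩
    refine ⟨e c, ?_⟩
    ext x
    simp

lemma colPart_rel {V : Type*} {f g : V → Fin 4} (h : colPart f = colPart g)
    {u v : V} (huv : f u = f v) : g u = g v := by
  have hmem : f ⁻¹' {f u} ∈ colPart f := ⟨⟨u, rfl⟩, f u, rfl⟩
  rw [h] at hmem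
  obtain ⟨-, c, hc⟩ := hmem
  have hu : g u = c := by
    have : u ∈ f ⁻¹' {f u} := rfl
    rwa [hc] at this
  have hv : g v = c := by
    have : v ∈ f ⁻¹' {f u} := by exact huv.symm
    rwa [hc] at this
  rw [hu, hv]

lemma fcol_zero {k : ℕ} (ε : Fin (k + 1) → Fin 2) (j : Fin 4) :
    fcol ε ((0 : Fin (k + 2)), j) = j := by
  simp [fcol, tsh]

lemma fcol_key {k : ℕ} (ε : Fin (k + 1) → Fin 2) (i : Fin (k + 1)) :
    (fcol ε (⟨(i : ℕ) + 1, by omega⟩, 0) = fcol ε (⟨(i : ℕ), by omega⟩, 1)) ↔ ε i = 0 := by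
  have hlt : (i : ℕ) < k + 1 := i.isLt
  simp only [fcol]
  rw [tsh_succ ε (i : ℕ) hlt]
  have hmk : (⟨(i : ℕ), hlt⟩ : Fin (k + 1)) = i := rfl
  rw [hmk]
  have key : ∀ T s : Fin 4, ((0 : Fin 4) + (T + s) = 1 + T) ↔ s = 1 := by decide
  rw [key]
  constructor
  · intro h
    rcases step2_cases (ε i) with h2 | h2
    · have h4 : ∀ b : Fin 2, step2 b = 1 → b = 0 := by decide
      exact h4 _ h2
    · rw [h2] at h; exact absurd h (by decide)
  · intro h
    rw [h]; rfl

lemma fcol_inj {k : ℕ} (ε ε' : Fin (k + 1) → Fin 2)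
    (h : colPart (fcol ε) = colPart (fcol ε')) : ε = ε' := by
  funext i
  have h1 : fcol ε (⟨(i : ℕ) + 1, by omega⟩, 0) = fcol ε (⟨(i : ℕ), by omega⟩, 1) ↔
      fcol ε' (⟨(i : ℕ) + 1, by omega⟩, 0) = fcol ε' (⟨(i : ℕ), by omega⟩, 1) :=
    ⟨fun hh => colPart_rel h hh, fun hh => colPart_rel h.symm hh⟩
  rw [fcol_key, fcol_key] at h1
  have : ∀ a b : Fin 2, ((a = 0) ↔ (b = 0)) → a = b := by decide
  exact this _ _ h1

end QkAux

/-- The number of coloring-partitions of `Q_k` arising from proper 4-colorings that use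
four pairwise distinct colors on `a_0, b_0, c_0, d_0` (type I colorings) is `2^(k+1)`. -/
theorem Qk_typeI_partition_count (k : ℕ) :
    {P : Set (Set (Fin (k + 2) × Fin 4)) | ∃ f, IsProperColoring (Qk k) f ∧
      Function.Injective (fun j : Fin 4 => f ((0 : Fin (k + 2)), j)) ∧
      P = colPart f}.ncard = 2 ^ (k + 1) := by
  classical
  have hset : {P : Set (Set (Fin (k + 2) × Fin 4)) | ∃ f, IsProperColoring (Qk k) f ∧
      Function.Injective (fun j : Fin 4 => f ((0 : Fin (k + 2)), j)) ∧ P = colPart f} =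
      Set.range (fun ε : Fin (k + 1) → Fin 2 => colPart (QkAux.fcol ε)) := by
    ext P
    simp only [Set.mem_setOf_eq, Set.mem_range]
    constructor
    · rintro ⟨f, hf, hinj, rfl⟩
      have hbij : Function.Bijective (fun j : Fin 4 => f ((0 : Fin (k + 2)), j)) :=
        (Finite.injective_iff_bijective).mp hinj
      set e : Fin 4 ≃ Fin 4 := Equiv.ofBijective _ hbij with he
      obtain ⟨ε, hε⟩ := QkAux.exists_eps hf e (fun j => rfl)
      refine ⟨ε, ?_⟩
      have hfeq : f = ⇑e ∘ QkAux.fcol ε := by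
        funext v
        obtain ⟨i, j⟩ := v
        have := hε (i : ℕ) i.isLt j
        rw [Fin.eta] at this
        exact this
      rw [hfeq, QkAux.colPart_comp_equiv]
    · rintro ⟨ε, rfl⟩
      refine ⟨QkAux.fcol ε, QkAux.fcol_proper ε, ?_, rfl⟩
      have : (fun j : Fin 4 => QkAux.fcol ε ((0 : Fin (k + 2)), j)) = fun j => j := by
        funext j; exact QkAux.fcol_zero ε j
      rw [this]
      exact fun a b hab => hab
  rw [hset]
  have hinj : Function.Injective (fun ε : Fin (k + 1) → Fin 2 => colPart (QkAux.fcol ε)) :=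
    fun a b hab => QkAux.fcol_inj a b hab
  rw [← Nat.card_coe_set_eq, Nat.card_range_of_injective hinj]
  simp [Nat.card_eq_fintype_card]
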